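/- Let f : X → Y be a continuous open surjection between topological spaces where X is second-countable and Baire. If F ⊆ X is closed nowhere dense, then ∃*_f(F) = {y ∈ Y : F ∩ f⁻¹(y) is nonmeager in f⁻¹(y)} is meager in Y. Consequently, if F ⊆ X is meager, then ∃*_f(F) is meager in Y. -/

import Mathlib

open Set

/-- The Baire category quantifier `∃*_f(A)`. -/
def fibNonmeager {X Y : Type*} [TopologicalSpace X] (f : X → Y) (A : Set X) : Set Y :=
  {y | ¬ IsMeagre (Subtype.val ⁻¹' A : Set (f ⁻¹' {y}))}

section aux

variable {X Y : Type*} [TopologicalSpace X] [TopologicalSpace Y]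
    [SecondCountableTopology X]

open TopologicalSpace

lemma aux_closed_nwd (f : X → Y) (hc : Continuous f) (ho : IsOpenMap f)
    {F : Set X} (hFcl : IsClosed F) (hFnd : IsNowhereDense F) :
    IsMeagre (fibNonmeager f F) := by
  have hFc : Dense Fᶜ := by
    rw [← interior_eq_empty_iff_dense_compl]
    rwa [hFcl.isNowhereDense_iff] at hFnd
  set D : Set X → Set Y := fun b => f '' b \ f '' (b ∩ Fᶜ) with hD
  -- the image of `b ∩ Fᶜ` is dense in the image of `b`
  have hdense : ∀ b : Set X, IsOpen b → f '' b ⊆ closure (f '' (b ∩ Fᶜ)) := by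
    intro b hb y hy
    obtain ⟨x, hxb, rfl⟩ := hy
    rw [mem_closure_iff]
    intro V hV hxV
    have hopen : IsOpen (f ⁻¹' V ∩ b) := (hV.preimage hc).inter hb
    have hne : (f ⁻¹' V ∩ b).Nonempty := ⟨x, hxV, hxb⟩
    obtain ⟨z, hz1, hz2⟩ := hFc.inter_open_nonempty _ hopen hne
    exact ⟨f z, hz1.1, ⟨z, ⟨hz1.2, hz2⟩, rfl⟩⟩
  -- each `D b` is nowhere dense
  have hnd : ∀ b : Set X, IsOpen b → IsNowhereDense (D b) := by
    intro b hb
    rw [IsNowhereDense, eq_empty_iff_forall_notMem]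
    intro y hy
    have hWc : closure (D b) ⊆ (f '' (b ∩ Fᶜ))ᶜ := by
      apply closure_minimal _ (ho _ (hb.inter hFcl.isOpen_compl)).isClosed_compl
      exact fun z hz => hz.2
    have h1 : closure (D b) ⊆ closure (f '' (b ∩ Fᶜ)) :=
      (closure_mono diff_subset).trans
        (closure_minimal (hdense b hb) isClosed_closure)
    have hyW : y ∈ closure (f '' (b ∩ Fᶜ)) := h1 (interior_subset hy)
    rw [mem_closure_iff] at hyW
    obtain ⟨z, hz1, hz2⟩ :=
      hyW (interior (closure (D b))) isOpen_interior hy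
    exact hWc (interior_subset hz1) hz2
  -- `fibNonmeager f F` is contained in the union of the `D b`
  have hsub : fibNonmeager f F ⊆ ⋃ b ∈ countableBasis X, D b := by
    intro y hy
    by_contra hnot
    simp only [mem_iUnion, not_exists] at hnot
    apply hy
    -- show the fiber trace of F is meagre; it is closed with dense complement
    have hclosed : IsClosed (Subtype.val ⁻¹' F : Set (f ⁻¹' {y})) :=
      hFcl.preimage continuous_subtype_val
    have hdenseC : Dense ((Subtype.val ⁻¹' F : Set (f ⁻¹' {y}))ᶜ) := by
      rw [← preimage_compl]
      rw [((isBasis_countableBasis X).isInducing Topology.IsInducing.subtypeVal).dense_iff]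
      rintro o ⟨b, hbB, rfl⟩ ⟨⟨x, hxfib⟩, hxb⟩
      have hxb' : x ∈ b := hxb
      have hyfb : y ∈ f '' b := ⟨x, hxb', hxfib⟩
      have : y ∈ f '' (b ∩ Fᶜ) := by
        by_contra h
        exact hnot b hbB ⟨hyfb, h⟩
      obtain ⟨x', hx', rfl⟩ := this
      refine ⟨⟨x', rfl⟩, ?_, ?_⟩
      · exact hx'.1
      · exact hx'.2
    have : IsNowhereDense (Subtype.val ⁻¹' F : Set (f ⁻¹' {y})) := by
      rw [hclosed.isNowhereDense_iff, interior_eq_empty_iff_dense_compl]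
      exact hdenseC
    rw [isMeagre_iff_countable_union_isNowhereDense]
    exact ⟨{Subtype.val ⁻¹' F}, by simpa using this, countable_singleton _,
      by simp⟩
  rw [isMeagre_iff_countable_union_isNowhereDense]
  refine ⟨D '' countableBasis X, ?_, (countable_countableBasis X).image D, ?_⟩
  · rintro t ⟨b, hb, rfl⟩
    exact hnd b (isOpen_of_mem_countableBasis hb)
  · refine hsub.trans ?_
    rw [sUnion_image]

end aux

/-- For a continuous open surjection `f : X → Y` with `X`
second-countable and Baire: if `F` is closed nowhere dense then `∃*_f(F)` is
meager in `Y`; consequently if `F` is meager then `∃*_f(F)` is meager in `Y`. -/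
theorem stmt_6 {X Y : Type*} [TopologicalSpace X] [TopologicalSpace Y]
    [SecondCountableTopology X] [BaireSpace X]
    (f : X → Y) (hc : Continuous f) (ho : IsOpenMap f) (hs : Function.Surjective f) :
    ∀ F : Set X,
      (IsClosed F → IsNowhereDense F → IsMeagre (fibNonmeager f F)) ∧
      (IsMeagre F → IsMeagre (fibNonmeager f F)) := by
  intro F
  refine ⟨fun h1 h2 => aux_closed_nwd f hc ho h1 h2, fun hF => ?_⟩
  obtain ⟨S, hSnd, hSc, hSsub⟩ := isMeagre_iff_countable_union_isNowhereDense.mp hF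
  -- replace each member by its closure
  rcases S.eq_empty_or_nonempty with rfl | hSne
  · have hF0 : F = ∅ := by simpa [subset_empty_iff] using hSsub
    subst hF0
    have hemp : fibNonmeager f (∅ : Set X) = ∅ := by
      ext y
      simp only [fibNonmeager, mem_setOf_eq, mem_empty_iff_false, iff_false, not_not,
        preimage_empty]
      exact IsMeagre.empty
    rw [hemp]
    exact IsMeagre.empty
  obtain ⟨g, hg⟩ := (Set.countable_iff_exists_surjective hSne).mp hSc
  have key : fibNonmeager f F ⊆ ⋃ n, fibNonmeager f (closure ((g n) : Set X)) := by
    intro y hy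
    by_contra hnot
    simp only [mem_iUnion, not_exists] at hnot
    apply hy
    have hmeag : ∀ n : ℕ, IsMeagre (Subtype.val ⁻¹' (closure ((g n) : Set X)) :
        Set (f ⁻¹' {y})) := by
      intro n
      by_contra h
      exact hnot n h
    have hsub2 : (Subtype.val ⁻¹' F : Set (f ⁻¹' {y})) ⊆
        ⋃ n, (Subtype.val ⁻¹' (closure ((g n) : Set X)) : Set (f ⁻¹' {y})) := by
      intro x hx
      obtain ⟨t, htS, hxt⟩ := hSsub hx
      obtain ⟨n, hn⟩ := hg ⟨t, htS⟩
      exact mem_iUnion.mpr ⟨n, by rw [hn]; exact subset_closure hxt⟩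
    exact (isMeagre_iUnion hmeag).mono hsub2
  have : ∀ n : ℕ, IsMeagre (fibNonmeager f (closure ((g n) : Set X))) := by
    intro n
    exact aux_closed_nwd f hc ho isClosed_closure
      ((hSnd _ (g n).2).closure)
  exact (isMeagre_iUnion this).mono key
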